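/- Let (X,T₁,…,T_d) be a minimal distal ℤ^d-system and let H be a subgroup of G. Then Q_H(X) is a closed equivalence relation on X which is invariant under g × g for every g ∈ G. -/

import Mathlib

open Function Set

/-- The group of self-homeomorphisms of a topological space, under composition. -/
instance homeomorphGroup {X : Type*} [TopologicalSpace X] : Group (X ≃ₜ X) where
  mul f g := g.trans f
  one := Homeomorph.refl X
  inv := Homeomorph.symm
  mul_assoc _ _ _ := rfl
  one_mul _ := Homeomorph.ext fun _ => rfl
  mul_one _ := Homeomorph.ext fun _ => rfl
  inv_mul_cancel f := Homeomorph.self_trans_symm f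

variable {d : ℕ}

/-- The homeomorphism `T₁^{n₁ε₁} ⋯ T_d^{n_dε_d}` associated with `n ∈ ℤ^d` and a vertex
`ε ∈ {0,1}^d` of the cube. -/
def cubeMap {X : Type*} [TopologicalSpace X] (T : Fin d → X ≃ₜ X)
    (n : Fin d → ℤ) (ε : Fin d → Bool) : X ≃ₜ X :=
  ((List.finRange d).map (fun i => T i ^ (if ε i then n i else 0))).prod

/-- The space of directional dynamical cubes `Q_{T₁,…,T_d}(X)`. -/
def cubes {X : Type*} [TopologicalSpace X] (T : Fin d → X ≃ₜ X) :
    Set ((Fin d → Bool) → X) :=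
  closure {y | ∃ (x : X) (n : Fin d → ℤ), ∀ ε, y ε = cubeMap T n ε x}

/-- The group of homeomorphisms generated by `T₁,…,T_d`. -/
def genGroup {X : Type*} [TopologicalSpace X] (T : Fin d → X ≃ₜ X) : Subgroup (X ≃ₜ X) :=
  Subgroup.closure (Set.range T)

/-- Minimality: every orbit is dense. -/
def IsMinimalSystem {X : Type*} [TopologicalSpace X] (T : Fin d → X ≃ₜ X) : Prop :=
  ∀ x : X, Dense {y : X | ∃ g ∈ genGroup T, g x = y}

/-- Distality: `inf_{g ∈ G} dist (g x) (g y) > 0` whenever `x ≠ y`. -/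
def IsDistalSystem {X : Type*} [MetricSpace X] (T : Fin d → X ≃ₜ X) : Prop :=
  ∀ x y : X, x ≠ y → ∃ δ > 0, ∀ g ∈ genGroup T, δ ≤ dist (g x) (g y)

/-- The relation `Q_H(X)`: the closure of `{(x, hx) : x ∈ X, h ∈ H}`. -/
def QH {X : Type*} [TopologicalSpace X] (H : Subgroup (X ≃ₜ X)) : Set (X × X) :=
  closure {p : X × X | ∃ x : X, ∃ h ∈ H, p = (x, h x)}


section Ellis

variable {Z : Type*} [MetricSpace Z] [CompactSpace Z]

theorem ellis_comp_mem {K : Set (Z → Z)}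
    (hcont : ∀ k ∈ K, Continuous k)
    (hcomp : ∀ k ∈ K, ∀ k' ∈ K, k ∘ k' ∈ K) :
    ∀ p ∈ closure K, ∀ q ∈ closure K, p ∘ q ∈ closure K := by
  have step1 : ∀ h ∈ K, ∀ q ∈ closure K, h ∘ q ∈ closure K := by
    intro h hh q hq
    have hc : Continuous (fun F : Z → Z => h ∘ F) :=
      continuous_pi fun z => (hcont h hh).comp (continuous_apply z)
    have h1 : h ∘ q ∈ closure ((fun F : Z → Z => h ∘ F) '' K) :=
      image_closure_subset_closure_image hc ⟨q, hq, rfl⟩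
    have h2 : ((fun F : Z → Z => h ∘ F) '' K) ⊆ K := by
      rintro _ ⟨k, hk, rfl⟩; exact hcomp h hh k hk
    exact closure_mono h2 h1
  intro p hp q hq
  have hc : Continuous (fun F : Z → Z => F ∘ q) :=
    continuous_pi fun z => continuous_apply (q z)
  have h1 : p ∘ q ∈ closure ((fun F : Z → Z => F ∘ q) '' closure K) :=
    subset_closure ⟨p, hp, rfl⟩
  have h2 : ((fun F : Z → Z => F ∘ q) '' closure K) ⊆ closure K := by
    have h3 : (fun F : Z → Z => F ∘ q) '' closure K ⊆
        closure ((fun F : Z → Z => F ∘ q) '' K) := image_closure_subset_closure_image hc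
    have h4 : ((fun F : Z → Z => F ∘ q) '' K) ⊆ closure K := by
      rintro _ ⟨k, hk, rfl⟩; exact step1 k hk q hq
    intro F hF
    have := closure_mono h4 (h3 hF)
    rwa [closure_closure] at this
  have := closure_mono h2 h1
  rwa [closure_closure] at this

theorem ellis_idem_id {K : Set (Z → Z)}
    (hdist : ∀ z z' : Z, z ≠ z' → ∃ δ > 0, ∀ k ∈ K, δ ≤ dist (k z) (k z'))
    {u : Z → Z} (hu : u ∈ closure K) (huu : u ∘ u = u) : u = id := by
  funext z
  by_contra hne
  have hne' : u z ≠ z := hne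
  have huz : u (u z) = u z := congrFun huu z
  obtain ⟨δ, hδ, hsep⟩ := hdist (u z) z hne'
  set W : Set (Z → Z) :=
    ((fun F : Z → Z => F (u z)) ⁻¹' Metric.ball (u z) (δ/2)) ∩
      ((fun F : Z → Z => F z) ⁻¹' Metric.ball (u z) (δ/2)) with hWdef
  have hV : IsOpen W :=
    (Metric.isOpen_ball.preimage (continuous_apply (u z))).inter
      (Metric.isOpen_ball.preimage (continuous_apply z))
  have huV : u ∈ W := by
    constructor
    · show u (u z) ∈ Metric.ball (u z) (δ/2)
      rw [Metric.mem_ball, huz, dist_self]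
      exact half_pos hδ
    · show u z ∈ Metric.ball (u z) (δ/2)
      rw [Metric.mem_ball, dist_self]
      exact half_pos hδ
  obtain ⟨k, ⟨hk1, hk2⟩, hkK⟩ := _root_.mem_closure_iff.mp hu _ hV huV
  rw [Set.mem_preimage, Metric.mem_ball] at hk1 hk2
  have h1 : δ ≤ dist (k (u z)) (k z) := hsep k hkK
  have h2 : dist (k (u z)) (k z) ≤ dist (k (u z)) (u z) + dist (u z) (k z) :=
    dist_triangle _ _ _
  rw [dist_comm (u z) (k z)] at h2
  linarith

theorem ellis_exists_inv {K : Set (Z → Z)}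
    (hcont : ∀ k ∈ K, Continuous k)
    (hcomp : ∀ k ∈ K, ∀ k' ∈ K, k ∘ k' ∈ K)
    (hdist : ∀ z z' : Z, z ≠ z' → ∃ δ > 0, ∀ k ∈ K, δ ≤ dist (k z) (k z')) :
    ∀ p ∈ closure K, ∃ q ∈ closure K, q ∘ p = id ∧ p ∘ q = id := by
  have hcompact : IsCompact (closure K) := isClosed_closure.isCompact
  have left : ∀ p ∈ closure K, ∃ q ∈ closure K, q ∘ p = id := by
    intro p hp
    set S : Set (Z → Z) := (fun q => q ∘ p) '' closure K with hSdef
    have hSsub : S ⊆ closure K := by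
      rintro _ ⟨q, hq, rfl⟩; exact ellis_comp_mem hcont hcomp q hq p hp
    have hScomp : IsCompact S :=
      hcompact.image (continuous_pi fun z => continuous_apply (p z))
    have hSne : S.Nonempty := ⟨p ∘ p, ⟨p, hp, rfl⟩⟩
    have hSmul : ∀ a ∈ S, ∀ b ∈ S, a ∘ b ∈ S := by
      rintro _ ⟨a, ha, rfl⟩ _ ⟨b, hb, rfl⟩
      exact ⟨a ∘ (p ∘ b),
        ellis_comp_mem hcont hcomp a ha _ (ellis_comp_mem hcont hcomp p hp b hb), rfl⟩
    haveI : Nonempty S := hSne.to_subtype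
    letI : Semigroup S :=
      { mul := fun a b => ⟨a.1 ∘ b.1, hSmul _ a.2 _ b.2⟩
        mul_assoc := fun a b c => Subtype.ext rfl }
    haveI : CompactSpace S := isCompact_iff_compactSpace.mp hScomp
    have hmul_left : ∀ r : S, Continuous (· * r) := by
      intro r
      apply Continuous.subtype_mk
      exact continuous_pi fun z => (continuous_apply (r.1 z)).comp continuous_subtype_val
    obtain ⟨m, hm⟩ := exists_idempotent_of_compact_t2_of_continuous_mul_left hmul_left
    have hmm : m.1 ∘ m.1 = m.1 := congrArg Subtype.val hm
    have hid : m.1 = id := ellis_idem_id hdist (hSsub m.2) hmm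
    obtain ⟨q, hq, hqp⟩ := m.2
    have hqp' : q ∘ p = m.1 := hqp
    exact ⟨q, hq, by rw [hqp', hid]⟩
  intro p hp
  obtain ⟨q, hq, hqp⟩ := left p hp
  obtain ⟨r, hr, hrq⟩ := left q hq
  have hrp : r = p := by
    have e1 : r ∘ (q ∘ p) = r := by rw [hqp]; rfl
    have e2 : r ∘ (q ∘ p) = (r ∘ q) ∘ p := rfl
    have e3 : (r ∘ q) ∘ p = p := by rw [hrq]; rfl
    rw [← e1, e2, e3]
  exact ⟨q, hq, hqp, by rw [← hrp, hrq]⟩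

end Ellis

section Comm

theorem genGroup_comm {X : Type*} [TopologicalSpace X] {d : ℕ} (T : Fin d → X ≃ₜ X)
    (hcomm : ∀ i j : Fin d, ∀ x : X, T i (T j x) = T j (T i x)) :
    ∀ a ∈ genGroup T, ∀ b ∈ genGroup T, a * b = b * a := by
  have hTi : ∀ (i : Fin d), ∀ b ∈ genGroup T, T i * b = b * T i := by
    intro i b hb
    have hle : genGroup T ≤ Subgroup.centralizer {T i} := by
      rw [genGroup, Subgroup.closure_le]
      rintro _ ⟨j, rfl⟩
      rw [SetLike.mem_coe, Subgroup.mem_centralizer_iff]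
      rintro g hg
      rw [Set.mem_singleton_iff] at hg
      subst hg
      exact Homeomorph.ext fun x => hcomm i j x
    have := hle hb
    rw [Subgroup.mem_centralizer_iff] at this
    exact this (T i) rfl
  intro a ha b hb
  have hle : genGroup T ≤ Subgroup.centralizer {b} := by
    rw [genGroup, Subgroup.closure_le]
    rintro _ ⟨j, rfl⟩
    rw [SetLike.mem_coe, Subgroup.mem_centralizer_iff]
    rintro g hg
    rw [Set.mem_singleton_iff] at hg
    rw [hg]
    exact (hTi j b hb).symm
  have := hle ha
  rw [Subgroup.mem_centralizer_iff] at this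
  exact (this b rfl).symm

end Comm

theorem QH_closed_invariant_equivalence {X : Type*} [MetricSpace X] [CompactSpace X]
    {d : ℕ} (T : Fin d → X ≃ₜ X)
    (hcomm : ∀ i j : Fin d, ∀ x : X, T i (T j x) = T j (T i x))
    (hmin : IsMinimalSystem T) (hdist : IsDistalSystem T)
    (H : Subgroup (X ≃ₜ X)) (hH : H ≤ genGroup T) :
    IsClosed (QH H) ∧
      Equivalence (fun x y : X => (x, y) ∈ QH H) ∧
      ∀ g ∈ genGroup T, ∀ x y : X, (x, y) ∈ QH H → (g x, g y) ∈ QH H := by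
  have hcomm' : ∀ a ∈ genGroup T, ∀ b ∈ genGroup T, a * b = b * a := genGroup_comm T hcomm
  have one_apply : ∀ x : X, (1 : X ≃ₜ X) x = x := fun _ => rfl
  have commpt : ∀ g ∈ genGroup T, ∀ h ∈ genGroup T, ∀ x : X, g (h x) = h (g x) := by
    intro g hg h hh x
    have hmul := hcomm' g hg h hh
    calc g (h x) = (g * h) x := rfl
    _ = (h * g) x := by rw [hmul]
    _ = h (g x) := rfl
  have hrefl : ∀ x : X, (x, x) ∈ QH H := by
    intro x
    refine subset_closure ⟨x, 1, H.one_mem, ?_⟩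
    rw [one_apply]
  have hsymm : ∀ x y : X, (x, y) ∈ QH H → (y, x) ∈ QH H := by
    intro x y hxy
    have hsub : QH H ⊆ Prod.swap ⁻¹' QH H := by
      apply closure_minimal
      · rintro p ⟨u, h, hh, rfl⟩
        show Prod.swap (u, h u) ∈ QH H
        refine subset_closure ⟨h u, h⁻¹, H.inv_mem hh, ?_⟩
        have : u = h⁻¹ (h u) := (h.symm_apply_apply u).symm
        rw [← this]
        rfl
      · exact isClosed_closure.preimage continuous_swap
    exact hsub hxy
  have hinv : ∀ g ∈ genGroup T, ∀ x y : X, (x, y) ∈ QH H → (g x, g y) ∈ QH H := by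
    intro g hg x y hxy
    have hsub : QH H ⊆ (fun p : X × X => (g p.1, g p.2)) ⁻¹' QH H := by
      apply closure_minimal
      · rintro p ⟨u, h, hh, rfl⟩
        show ((g u, g (h u)) : X × X) ∈ QH H
        refine subset_closure ⟨g u, h, hh, ?_⟩
        rw [commpt g hg h (hH hh) u]
      · exact isClosed_closure.preimage
          ((g.continuous.comp continuous_fst).prodMk (g.continuous.comp continuous_snd))
    exact hsub hxy
  have htrans : ∀ a b c : X, (a, b) ∈ QH H → (b, c) ∈ QH H → (a, c) ∈ QH H := by
    rcases isEmpty_or_nonempty X with hX | hX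
    · intro a; exact isEmptyElim a
    obtain ⟨x₀⟩ := hX
    set z₀ : X × X := (x₀, x₀) with hz₀
    set Kset : Set (X × X → X × X) :=
      {F | ∃ g ∈ genGroup T, ∃ h ∈ H, F = fun z => (g z.1, g (h z.2))} with hKdef
    have hKcont : ∀ k ∈ Kset, Continuous k := by
      rintro _ ⟨g, hg, h, hh, rfl⟩
      exact (g.continuous.comp continuous_fst).prodMk
        (g.continuous.comp (h.continuous.comp continuous_snd))
    have hKcomp : ∀ k ∈ Kset, ∀ k' ∈ Kset, k ∘ k' ∈ Kset := by
      rintro _ ⟨g, hg, h, hh, rfl⟩ _ ⟨g', hg', h', hh', rfl⟩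
      refine ⟨g * g', mul_mem hg hg', h * h', mul_mem hh hh', ?_⟩
      funext z
      show (g (g' z.1), g (h (g' (h' z.2)))) = ((g * g') z.1, (g * g') ((h * h') z.2))
      refine Prod.ext_iff.mpr ⟨rfl, ?_⟩
      show g (h (g' (h' z.2))) = g (g' (h (h' z.2)))
      rw [commpt h (hH hh) g' hg' (h' z.2)]
    have hKdist : ∀ z z' : X × X, z ≠ z' → ∃ δ > 0, ∀ k ∈ Kset, δ ≤ dist (k z) (k z') := by
      intro z z' hne
      by_cases h1 : z.1 = z'.1
      · have h2 : z.2 ≠ z'.2 := fun h2 => hne (Prod.ext_iff.mpr ⟨h1, h2⟩)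
        obtain ⟨δ, hδ, hsep⟩ := hdist z.2 z'.2 h2
        refine ⟨δ, hδ, ?_⟩
        rintro _ ⟨g, hg, h, hh, rfl⟩
        show δ ≤ dist ((g z.1, g (h z.2))) ((g z'.1, g (h z'.2)))
        have hle : δ ≤ dist ((g * h) z.2) ((g * h) z'.2) := hsep _ (mul_mem hg (hH hh))
        refine le_trans hle ?_
        rw [Prod.dist_eq]
        exact le_max_right _ _
      · obtain ⟨δ, hδ, hsep⟩ := hdist z.1 z'.1 h1
        refine ⟨δ, hδ, ?_⟩
        rintro _ ⟨g, hg, h, hh, rfl⟩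
        show δ ≤ dist ((g z.1, g (h z.2))) ((g z'.1, g (h z'.2)))
        refine le_trans (hsep g hg) ?_
        rw [Prod.dist_eq]
        exact le_max_left _ _
    have himg : ∀ F ∈ Kset, F z₀ ∈ {p : X × X | ∃ x : X, ∃ h ∈ H, p = (x, h x)} := by
      rintro _ ⟨g, hg, h, hh, rfl⟩
      refine ⟨g x₀, h, hh, ?_⟩
      show (g x₀, g (h x₀)) = (g x₀, h (g x₀))
      rw [commpt g hg h (hH hh) x₀]
    have claim2 : ∀ F ∈ closure Kset, F z₀ ∈ QH H := by
      intro F hF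
      have h1 : F z₀ ∈ closure ((fun F : X × X → X × X => F z₀) '' Kset) :=
        image_closure_subset_closure_image (continuous_apply z₀) ⟨F, hF, rfl⟩
      refine closure_mono ?_ h1
      rintro _ ⟨k, hk, rfl⟩
      exact himg k hk
    have hEvcomp : IsCompact ((fun F : X × X → X × X => F z₀) '' closure Kset) :=
      (isClosed_closure.isCompact).image (continuous_apply z₀)
    have claim1 : ∀ w ∈ QH H, ∃ F ∈ closure Kset, F z₀ = w := by
      have hgen : {p : X × X | ∃ x : X, ∃ h ∈ H, p = (x, h x)} ⊆
          (fun F : X × X → X × X => F z₀) '' closure Kset := by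
        rintro p ⟨x, h, hh, rfl⟩
        have hsub2 : closure ((fun F : X × X → X × X => F z₀) '' Kset) ⊆
            (fun F : X × X → X × X => F z₀) '' closure Kset :=
          closure_minimal (Set.image_mono subset_closure) hEvcomp.isClosed
        apply hsub2
        rw [Metric.mem_closure_iff]
        intro ε hε
        obtain ⟨η, hη, hηc⟩ := Metric.continuous_iff.mp h.continuous x ε hε
        have hr : 0 < min η ε := lt_min hη hε
        obtain ⟨y, hyball, g, hg, hgx⟩ := Metric.dense_iff.mp (hmin x₀) x (min η ε) hr
        refine ⟨(g x₀, h (g x₀)), ?_, ?_⟩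
        · refine ⟨fun z => (g z.1, g (h z.2)), ⟨g, hg, h, hh, rfl⟩, ?_⟩
          show (g x₀, g (h x₀)) = (g x₀, h (g x₀))
          rw [commpt g hg h (hH hh) x₀]
        · rw [Prod.dist_eq]
          apply max_lt
          · have : dist y x < min η ε := Metric.mem_ball.mp hyball
            rw [hgx]
            calc dist x y = dist y x := dist_comm _ _
            _ < min η ε := this
            _ ≤ ε := min_le_right _ _
          · have hdyx : dist y x < η :=
              lt_of_lt_of_le (Metric.mem_ball.mp hyball) (min_le_left _ _)
            have := hηc y hdyx
            rw [hgx]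
            calc dist (h x) (h y) = dist (h y) (h x) := dist_comm _ _
            _ < ε := this
      intro w hw
      have hQsub : QH H ⊆ (fun F : X × X → X × X => F z₀) '' closure Kset :=
        closure_minimal hgen hEvcomp.isClosed
      obtain ⟨F, hF, hFz⟩ := hQsub hw
      exact ⟨F, hF, hFz⟩
    have hP : ∀ F ∈ closure Kset, ∀ z : X × X,
        F z = ((F (z.1, z.1)).1, (F (z.2, z.2)).2) := by
      have hcl : IsClosed {F : X × X → X × X |
          ∀ z : X × X, F z = ((F (z.1, z.1)).1, (F (z.2, z.2)).2)} := by
        have heq : {F : X × X → X × X |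
            ∀ z : X × X, F z = ((F (z.1, z.1)).1, (F (z.2, z.2)).2)} =
            ⋂ z : X × X, {F : X × X → X × X |
              F z = ((F (z.1, z.1)).1, (F (z.2, z.2)).2)} := by
          ext F; simp [Set.mem_iInter]
        rw [heq]
        refine isClosed_iInter fun z => isClosed_eq (continuous_apply z) ?_
        exact ((continuous_apply (z.1, z.1)).fst).prodMk ((continuous_apply (z.2, z.2)).snd)
      intro F hF
      refine closure_minimal ?_ hcl hF
      rintro _ ⟨g, hg, h, hh, rfl⟩ z
      rfl
    have hPsi2 : ∀ A ∈ closure Kset,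
        (fun z : X × X => ((A (z.1, z.1)).2, (A (z.2, z.2)).2)) ∈ closure Kset := by
      intro A hA
      have hc : Continuous (fun F : X × X → X × X =>
          fun z : X × X => ((F (z.1, z.1)).2, (F (z.2, z.2)).2)) :=
        continuous_pi fun z =>
          ((continuous_apply (z.1, z.1)).snd).prodMk ((continuous_apply (z.2, z.2)).snd)
      have h1 := image_closure_subset_closure_image hc (Set.mem_image_of_mem _ hA)
      have h2 : ((fun F : X × X → X × X =>
          fun z : X × X => ((F (z.1, z.1)).2, (F (z.2, z.2)).2)) '' Kset) ⊆ Kset := by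
        rintro _ ⟨k, ⟨g, hg, h, hh, rfl⟩, rfl⟩
        refine ⟨g * h, mul_mem hg (hH hh), 1, H.one_mem, ?_⟩
        funext z
        rfl
      exact closure_mono h2 h1
    have hPsi1 : ∀ B ∈ closure Kset,
        (fun z : X × X => ((B (z.1, z.1)).1, (B (z.2, z.2)).1)) ∈ closure Kset := by
      intro B hB
      have hc : Continuous (fun F : X × X → X × X =>
          fun z : X × X => ((F (z.1, z.1)).1, (F (z.2, z.2)).1)) :=
        continuous_pi fun z =>
          ((continuous_apply (z.1, z.1)).fst).prodMk ((continuous_apply (z.2, z.2)).fst)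
      have h1 := image_closure_subset_closure_image hc (Set.mem_image_of_mem _ hB)
      have h2 : ((fun F : X × X → X × X =>
          fun z : X × X => ((F (z.1, z.1)).1, (F (z.2, z.2)).1)) '' Kset) ⊆ Kset := by
        rintro _ ⟨k, ⟨g, hg, h, hh, rfl⟩, rfl⟩
        refine ⟨g, hg, 1, H.one_mem, ?_⟩
        funext z
        rfl
      exact closure_mono h2 h1
    intro a b c hab hbc
    obtain ⟨A, hA, hAz⟩ := claim1 (a, b) hab
    obtain ⟨B, hB, hBz⟩ := claim1 (b, c) hbc
    set U : X × X → X × X := fun z => ((A (z.1, z.1)).2, (A (z.2, z.2)).2) with hUdef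
    have hU : U ∈ closure Kset := hPsi2 A hA
    set V : X × X → X × X := fun z => ((B (z.1, z.1)).1, (B (z.2, z.2)).1) with hVdef
    have hV : V ∈ closure Kset := hPsi1 B hB
    obtain ⟨U', hU', hU'U, hUU'⟩ := ellis_exists_inv hKcont hKcomp hKdist U hU
    obtain ⟨V', hV', hV'V, hVV'⟩ := ellis_exists_inv hKcont hKcomp hKdist V hV
    have e1 : U z₀ = (b, b) := by
      show ((A (x₀, x₀)).2, (A (x₀, x₀)).2) = (b, b)
      rw [show A (x₀, x₀) = (a, b) from hAz]
    have e2 : V z₀ = (b, b) := by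
      show ((B (x₀, x₀)).1, (B (x₀, x₀)).1) = (b, b)
      rw [show B (x₀, x₀) = (b, c) from hBz]
    have e3 : V' (b, b) = z₀ := by rw [← e2]; exact congrFun hV'V z₀
    have e4 : U' (b, b) = z₀ := by rw [← e1]; exact congrFun hU'U z₀
    have e5 : (A ((U' (c, c)).2, (U' (c, c)).2)).2 = c := by
      have h6 : U (U' (c, c)) = (c, c) := congrFun hUU' (c, c)
      have h7 : (U (U' (c, c))).2 = (A ((U' (c, c)).2, (U' (c, c)).2)).2 := rfl
      rw [h6] at h7
      exact h7.symm
    have hC : A ∘ (U' ∘ (B ∘ (V' ∘ U))) ∈ closure Kset := by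
      refine ellis_comp_mem hKcont hKcomp A hA _ ?_
      refine ellis_comp_mem hKcont hKcomp U' hU' _ ?_
      refine ellis_comp_mem hKcont hKcomp B hB _ ?_
      exact ellis_comp_mem hKcont hKcomp V' hV' U hU
    have hCz : (A ∘ (U' ∘ (B ∘ (V' ∘ U)))) z₀ = (a, c) := by
      show A (U' (B (V' (U z₀)))) = (a, c)
      rw [e1, e3]
      rw [show B z₀ = (b, c) from hBz]
      have hU'bc : U' (b, c) = ((U' (b, b)).1, (U' (c, c)).2) := hP U' hU' (b, c)
      rw [hU'bc, e4]
      show A (x₀, (U' (c, c)).2) = (a, c)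
      have hA2 : A (x₀, (U' (c, c)).2) =
          ((A (x₀, x₀)).1, (A ((U' (c, c)).2, (U' (c, c)).2)).2) :=
        hP A hA (x₀, (U' (c, c)).2)
      rw [hA2, show A (x₀, x₀) = (a, b) from hAz, e5]
    have hmem := claim2 _ hC
    rwa [hCz] at hmem
  exact ⟨isClosed_closure,
    ⟨hrefl, fun {x y} h => hsymm x y h, fun {x y z} h1 h2 => htrans x y z h1 h2⟩,
    hinv⟩
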